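/- (Theorem 4, distribution relation.) For every real q with 0 < q < 1, integers α ≥ 1 and n ≥ 0, every real x ≥ 0, every odd positive integer d and Dirichlet character χ modulo d, Ẽ^χ_{n,q}(dx|α) = ( [d:q^α]^n / [d:−q] ) · Σ_{a=0}^{d−1} (−1)^a χ(a) q^a Ẽ_{n,q^d}( x + a/d | α ), where [d:−q] = ((−q)^d − 1)/(−q − 1) = (1 + q^d)/(1 + q). -/

import Mathlib

open scoped BigOperators

/-- `[x:q] = (q^x - 1)/(q - 1)` with real exponentiation. -/
noncomputable def qNum (q x : ℝ) : ℝ := (q ^ x - 1) / (q - 1)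

/-- `[d:-q] = ((-q)^d - 1)/(-q - 1)` for a natural number `d`. -/
noncomputable def qNumNeg (q : ℝ) (d : ℕ) : ℝ := ((-q) ^ d - 1) / (-q - 1)

/-- Weighted `q`-Euler polynomial `Ẽ_{n,q}(x|α) = [2:q] ∑_{m≥0} (-1)^m q^m [m+x:q^α]^n`. -/
noncomputable def qEuler (q : ℝ) (α n : ℕ) (x : ℝ) : ℝ :=
  qNum q 2 * ∑' m : ℕ, (-1 : ℝ) ^ m * q ^ m * (qNum (q ^ α) ((m : ℝ) + x)) ^ n

/-- Dirichlet-type weighted `q`-Euler polynomial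
`Ẽ^χ_{n,q}(x|α) = [2:q] ∑_{m≥0} q^m χ(m) (-1)^m [x+m:q^α]^n`. -/
noncomputable def qEulerChi (q : ℝ) (d : ℕ) (χ : DirichletCharacter ℂ d) (α n : ℕ)
    (x : ℝ) : ℂ :=
  (qNum q 2 : ℂ) *
    ∑' m : ℕ, (q : ℂ) ^ m * χ (m : ZMod d) * (-1 : ℂ) ^ m *
      ((qNum (q ^ α) (x + (m : ℝ)) : ℝ) : ℂ) ^ n

lemma qNum_two {q : ℝ} (hq : q ≠ 1) : qNum q 2 = q + 1 := by
  unfold qNum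
  rw [Real.rpow_two]
  have h : q - 1 ≠ 0 := sub_ne_zero.mpr hq
  field_simp
  ring

lemma qNum_nonneg {q : ℝ} (hq0 : 0 < q) (hq1 : q < 1) {y : ℝ} (hy : 0 ≤ y) :
    0 ≤ qNum q y := by
  have h1 : q ^ y ≤ 1 := Real.rpow_le_one hq0.le hq1.le hy
  unfold qNum
  have h : qNum q y = (1 - q ^ y) / (1 - q) := by
    unfold qNum
    rw [div_eq_div_iff (by linarith) (by linarith)]
    ring
  rw [show (q ^ y - 1) / (q - 1) = (1 - q ^ y) / (1 - q) by
    rw [div_eq_div_iff (by linarith) (by linarith)]; ring]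
  exact div_nonneg (by linarith) (by linarith)

lemma qNum_le {q : ℝ} (hq0 : 0 < q) (hq1 : q < 1) (y : ℝ) :
    qNum q y ≤ (1 - q)⁻¹ := by
  have h2 : 0 < q ^ y := Real.rpow_pos_of_pos hq0 y
  unfold qNum
  rw [show (q ^ y - 1) / (q - 1) = (1 - q ^ y) / (1 - q) by
    rw [div_eq_div_iff (by linarith) (by linarith)]; ring, ← one_div]
  apply div_le_div_of_nonneg_right ?_ (by linarith) |>.trans_eq rfl
  linarith

lemma qNum_key {q : ℝ} (hq0 : 0 < q) (hq1 : q < 1) {α : ℕ} (hα : α ≠ 0)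
    (x : ℝ) {d : ℕ} (hd : d ≠ 0) (a k : ℕ) :
    qNum (q ^ α) ((d : ℝ) * x + ((k * d + a : ℕ) : ℝ)) =
      qNum (q ^ α) (d : ℝ) * qNum ((q ^ d) ^ α) ((k : ℝ) + (x + (a : ℝ) / d)) := by
  set t := q ^ α with htdef
  have ht0 : 0 < t := pow_pos hq0 α
  have ht1 : t < 1 := pow_lt_one₀ hq0.le hq1 hα
  have htd : (q ^ d) ^ α = t ^ d := by
    rw [htdef, ← pow_mul, ← pow_mul, Nat.mul_comm]
  have hdR : (d : ℝ) ≠ 0 := Nat.cast_ne_zero.mpr hd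
  have h1 : ((q ^ d) ^ α : ℝ) ^ ((k : ℝ) + (x + (a : ℝ) / d)) =
      t ^ ((d : ℝ) * x + ((k * d + a : ℕ) : ℝ)) := by
    rw [htd, ← Real.rpow_natCast_mul ht0.le]
    congr 1
    push_cast
    field_simp
    ring
  have h2 : t ^ d - 1 ≠ 0 := by
    have : t ^ d < 1 := pow_lt_one₀ ht0.le ht1 hd
    linarith
  have h3 : t - 1 ≠ 0 := by linarith
  unfold qNum
  rw [h1, htd, Real.rpow_natCast]
  field_simp

theorem statement9 (q : ℝ) (hq0 : 0 < q) (hq1 : q < 1)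
    (α : ℕ) (hα : 1 ≤ α) (n : ℕ) (x : ℝ) (hx : 0 ≤ x)
    (d : ℕ) (hd0 : 0 < d) (hdo : Odd d) (χ : DirichletCharacter ℂ d) :
    qEulerChi q d χ α n ((d : ℝ) * x) =
      (((qNum (q ^ α) d) ^ n / qNumNeg q d : ℝ) : ℂ) *
        ∑ a ∈ Finset.range d,
          (-1 : ℂ) ^ a * χ (a : ZMod d) * (q : ℂ) ^ a *
            ((qEuler (q ^ d) α n (x + (a : ℝ) / d) : ℝ) : ℂ) := by
  haveI : NeZero d := ⟨hd0.ne'⟩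
  have hα0 : α ≠ 0 := by omega
  have hd : d ≠ 0 := hd0.ne'
  have ht0 : 0 < q ^ α := pow_pos hq0 α
  have ht1 : q ^ α < 1 := pow_lt_one₀ hq0.le hq1 hα0
  have hqd0 : 0 < q ^ d := pow_pos hq0 d
  have hqd1 : q ^ d < 1 := pow_lt_one₀ hq0.le hq1 hd
  -- the summand of the LHS series
  set F : ℕ → ℂ := fun m => (q : ℂ) ^ m * χ ((m : ℕ) : ZMod d) * (-1 : ℂ) ^ m *
      ((qNum (q ^ α) ((d : ℝ) * x + (m : ℝ)) : ℝ) : ℂ) ^ n with hFdef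
  -- summability of F
  have hF : Summable F := by
    apply Summable.of_norm_bounded (g := fun m => ((1 - q ^ α)⁻¹) ^ n * q ^ m)
      ((summable_geometric_of_lt_one hq0.le hq1).mul_left _)
    intro m
    have hy : (0 : ℝ) ≤ (d : ℝ) * x + (m : ℝ) := by positivity
    have hb0 : 0 ≤ qNum (q ^ α) ((d : ℝ) * x + (m : ℝ)) := qNum_nonneg ht0 ht1 hy
    have hb1 : qNum (q ^ α) ((d : ℝ) * x + (m : ℝ)) ≤ (1 - q ^ α)⁻¹ := qNum_le ht0 ht1 _
    have hchi : ‖χ ((m : ℕ) : ZMod d)‖ ≤ 1 := χ.norm_le_one _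
    have e : ‖F m‖ = q ^ m * ‖χ ((m : ℕ) : ZMod d)‖ *
        (qNum (q ^ α) ((d : ℝ) * x + (m : ℝ))) ^ n := by
      rw [hFdef]
      simp only [norm_mul, norm_pow, norm_neg, norm_one, one_pow, mul_one,
        Complex.norm_real, Real.norm_eq_abs, abs_of_pos hq0, abs_of_nonneg hb0]
    rw [e]
    calc q ^ m * ‖χ ((m : ℕ) : ZMod d)‖ * (qNum (q ^ α) ((d : ℝ) * x + (m : ℝ))) ^ n
        ≤ q ^ m * 1 * ((1 - q ^ α)⁻¹) ^ n := by
          gcongr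
      _ = ((1 - q ^ α)⁻¹) ^ n * q ^ m := by ring
  -- reindexing equivalence
  set E : Fin d × ℕ ≃ ℕ := (Equiv.prodComm (Fin d) ℕ).trans (Nat.divModEquiv d).symm
    with hEdef
  -- inner sum value
  have key : ∀ a : ℕ,
      ∑' k : ℕ, F (k * d + a) =
        ((-1 : ℂ) ^ a * χ ((a : ℕ) : ZMod d) * (q : ℂ) ^ a *
            ((qNum (q ^ α) (d : ℝ) : ℝ) : ℂ) ^ n) *
          (((q : ℂ) ^ d + 1)⁻¹ *
            ((qEuler (q ^ d) α n (x + (a : ℝ) / d) : ℝ) : ℂ)) := by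
    intro a
    have hterm : ∀ k : ℕ, F (k * d + a) =
        ((-1 : ℂ) ^ a * χ ((a : ℕ) : ZMod d) * (q : ℂ) ^ a *
            ((qNum (q ^ α) (d : ℝ) : ℝ) : ℂ) ^ n) *
          ((-1 : ℂ) ^ k * ((q : ℂ) ^ d) ^ k *
            ((qNum ((q ^ d) ^ α) ((k : ℝ) + (x + (a : ℝ) / d)) : ℝ) : ℂ) ^ n) := by
      intro k
      have hchi : χ (((k * d + a : ℕ)) : ZMod d) = χ ((a : ℕ) : ZMod d) := by
        push_cast
        simp [ZMod.natCast_self]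
      have hpow : (q : ℂ) ^ (k * d + a) = ((q : ℂ) ^ d) ^ k * (q : ℂ) ^ a := by
        rw [pow_add, ← pow_mul, Nat.mul_comm]
      have hneg : (-1 : ℂ) ^ (k * d + a) = (-1 : ℂ) ^ k * (-1 : ℂ) ^ a := by
        rw [pow_add, Nat.mul_comm k d, pow_mul, hdo.neg_one_pow]
      have hkey := qNum_key hq0 hq1 hα0 x hd a k
      simp only [hFdef]
      rw [hchi, hpow, hneg, hkey]
      push_cast
      ring
    rw [tsum_congr hterm, tsum_mul_left]
    congr 1
    have hne : ((q : ℂ) ^ d + 1) ≠ 0 := by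
      have h : ((q : ℂ) ^ d + 1) = ((q ^ d + 1 : ℝ) : ℂ) := by push_cast; ring
      rw [h]
      exact_mod_cast (by positivity : (q ^ d + 1 : ℝ) ≠ 0)
    have hE2 : ((qEuler (q ^ d) α n (x + (a : ℝ) / d) : ℝ) : ℂ) =
        ((q : ℂ) ^ d + 1) *
          ∑' k : ℕ, ((-1 : ℂ) ^ k * ((q : ℂ) ^ d) ^ k *
            ((qNum ((q ^ d) ^ α) ((k : ℝ) + (x + (a : ℝ) / d)) : ℝ) : ℂ) ^ n) := by
      unfold qEuler
      rw [qNum_two hqd1.ne, Complex.ofReal_mul, Complex.ofReal_tsum]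
      have h1 : ((q ^ d + 1 : ℝ) : ℂ) = ((q : ℂ) ^ d + 1) := by push_cast; ring
      rw [h1]
      congr 1
      apply tsum_congr
      intro k
      push_cast
      ring
    rw [hE2, ← mul_assoc, inv_mul_cancel₀ hne, one_mul]
  -- split the tsum
  have hsplit : ∑' m : ℕ, F m = ∑ a ∈ Finset.range d, ∑' k : ℕ, F (k * d + a) := by
    have h1 : ∑' m : ℕ, F m = ∑' p : Fin d × ℕ, F (E p) := (Equiv.tsum_eq E F).symm
    have hFE : Summable (F ∘ E) := (E.summable_iff (f := F)).mpr hF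
    have h2 : ∑' p : Fin d × ℕ, F (E p) =
        ∑' (a : Fin d), ∑' (k : ℕ), F (E (a, k)) :=
      Summable.tsum_prod' hFE (fun b => hFE.comp_injective (Prod.mk_right_injective b))
    have hEa : ∀ (a : Fin d) (k : ℕ), E (a, k) = k * d + (a : ℕ) := fun a k => by rw [hEdef]; rfl
    have h3 : ∑' (a : Fin d), ∑' (k : ℕ), F (E (a, k)) =
        ∑' (a : Fin d), ∑' (k : ℕ), F (k * d + (a : ℕ)) := by
      apply tsum_congr; intro a; apply tsum_congr; intro k; rw [hEa]
    rw [h1, h2, h3, tsum_fintype]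
    exact Fin.sum_univ_eq_sum_range (fun a => ∑' k : ℕ, F (k * d + a)) d
  -- assemble
  unfold qEulerChi
  have hxF : (∑' m : ℕ, (q : ℂ) ^ m * χ ((m : ℕ) : ZMod d) * (-1 : ℂ) ^ m *
      ((qNum (q ^ α) ((d : ℝ) * x + (m : ℝ)) : ℝ) : ℂ) ^ n) = ∑' m : ℕ, F m := by
    simp only [hFdef]
  rw [hxF, hsplit, qNum_two hq1.ne]
  rw [Finset.mul_sum, Finset.mul_sum]
  apply Finset.sum_congr rfl
  intro a _
  rw [key a]
  have hNeg : qNumNeg q d = (q ^ d + 1) / (q + 1) := by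
    unfold qNumNeg
    rw [hdo.neg_pow]
    rw [div_eq_div_iff (by nlinarith) (by nlinarith)]
    ring
  rw [hNeg]
  have h1' : ((q : ℂ) + 1) ≠ 0 := by
    have h : ((q : ℂ) + 1) = ((q + 1 : ℝ) : ℂ) := by push_cast; ring
    rw [h]; exact_mod_cast (by positivity : (q + 1 : ℝ) ≠ 0)
  have h2' : ((q : ℂ) ^ d + 1) ≠ 0 := by
    have h : ((q : ℂ) ^ d + 1) = ((q ^ d + 1 : ℝ) : ℂ) := by push_cast; ring
    rw [h]; exact_mod_cast (by positivity : (q ^ d + 1 : ℝ) ≠ 0)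
  push_cast
  field_simp
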